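/- Let ω_1, ω_2, ω_3 be nonzero complex numbers and set q = e^{2πiω_1/ω_2}, p = e^{2πiω_3/ω_2}, q̃ = e^{−2πiω_2/ω_1}, p̃ = e^{2πiω_3/ω_1}; assume |q| < 1, |p| < 1 and |p̃| < 1 (then also |q̃| < 1). Define G(u;ω_1,ω_2,ω_3) = ∏_{j,k=0}^∞ [(1 − e^{−2πiu/ω_2} q^{j+1} p^{k+1})(1 − e^{2πiu/ω_1} q̃^{j+1} p̃^{k})] / [(1 − e^{2πiu/ω_2} q^{j} p^{k})(1 − e^{−2πiu/ω_1} q̃^{j} p̃^{k+1})]. Then, for every u ∈ ℂ at which all the relevant denominators are nonzero, G satisfies the three difference equations: G(u+ω_1;ω) = θ(e^{2πiu/ω_2};p) · G(u;ω); G(u+ω_2;ω) = θ(e^{2πiu/ω_1};p̃) · G(u;ω); and G(u+ω_3;ω) = [θ(e^{2πiu/ω_2};q) / θ(e^{2πiu/ω_1} q̃; q̃)] · G(u;ω). -/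

import Mathlib

open scoped BigOperators
open Finset

noncomputable def qPoch (z q : ℂ) : ℂ := ∏' k : ℕ, (1 - z * q ^ k)

noncomputable def theta (z p : ℂ) : ℂ :=
  ∏' k : ℕ, ((1 - z * p ^ k) * (1 - p ^ (k + 1) / z))

noncomputable def thetaPoch (z p q : ℂ) (n : ℕ) : ℂ :=
  ∏ l ∈ Finset.range n, theta (z * q ^ l) p

noncomputable def ellGamma (z q p : ℂ) : ℂ :=
  ∏' jk : ℕ × ℕ,
    ((1 - q ^ (jk.1 + 1) * p ^ (jk.2 + 1) / z) / (1 - z * q ^ jk.1 * p ^ jk.2))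

noncomputable def torusInt : (n : ℕ) → ((Fin n → ℂ) → ℂ) → ℂ
  | 0, f => f (fun i => i.elim0)
  | n + 1, f => ∮ z in C(0, 1), (torusInt n (fun w => f (Fin.cons z w))) / z

local notation "π" => (Real.pi : ℂ)
local notation "𝕚" => Complex.I


open Complex

noncomputable def LS (c r s : ℂ) : ℂ := ∑' jk : ℕ × ℕ, Complex.log (1 - c * r ^ jk.1 * s ^ jk.2)
noncomputable def LT1 (c r : ℂ) : ℂ := ∑' j : ℕ, Complex.log (1 - c * r ^ j)

lemma myHasProd_zero {ι : Type*} {f : ι → ℂ} (i₀ : ι) (h : f i₀ = 0) : HasProd f 0 := by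
  have hev : ∀ᶠ s : Finset ι in Filter.atTop, (0 : ℂ) = ∏ i ∈ s, f i := by
    filter_upwards [Filter.eventually_ge_atTop ({i₀} : Finset ι)] with s hs
    exact (Finset.prod_eq_zero (hs (Finset.mem_singleton_self i₀)) h).symm
  exact Filter.Tendsto.congr' hev tendsto_const_nhds

lemma mySummable_log {ι : Type*} {a : ι → ℂ} (ha : Summable a) :
    Summable fun i => Complex.log (1 - a i) := by
  refine Summable.of_norm_bounded_eventually (g := fun i => 3/2 * ‖a i‖) (ha.norm.mul_left _) ?_
  filter_upwards [ha.tendsto_cofinite_zero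
    (Metric.ball_mem_nhds 0 (by norm_num : (0:ℝ) < 1/2))] with i hi
  have h2 : ‖-a i‖ ≤ 1/2 := by
    rw [norm_neg]
    simpa [Complex.dist_eq] using (le_of_lt (Metric.mem_ball.mp hi))
  simpa [sub_eq_add_neg, norm_neg] using Complex.norm_log_one_add_half_le_self h2

lemma mySummable_geom2 (c r s : ℂ) (hr : ‖r‖ < 1) (hs : ‖s‖ < 1) :
    Summable (fun jk : ℕ × ℕ => c * r ^ jk.1 * s ^ jk.2) := by
  have h1 : Summable (fun n : ℕ => ‖r‖ ^ n) :=
    summable_geometric_of_lt_one (norm_nonneg r) hr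
  have h2 : Summable (fun n : ℕ => ‖s‖ ^ n) :=
    summable_geometric_of_lt_one (norm_nonneg s) hs
  have h3 := (h1.mul_of_nonneg h2 (fun n => pow_nonneg (norm_nonneg r) n)
    (fun n => pow_nonneg (norm_nonneg s) n)).mul_left ‖c‖
  refine Summable.of_norm (h3.congr fun jk => ?_)
  simp [norm_mul, norm_pow, mul_assoc]

lemma mySummable_geom1 (c r : ℂ) (hr : ‖r‖ < 1) :
    Summable (fun n : ℕ => c * r ^ n) :=
  (summable_geometric_of_norm_lt_one hr).mul_left c

lemma mySummable_LS (c r s : ℂ) (hr : ‖r‖ < 1) (hs : ‖s‖ < 1) :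
    Summable (fun jk : ℕ × ℕ => Complex.log (1 - c * r ^ jk.1 * s ^ jk.2)) :=
  mySummable_log (mySummable_geom2 c r s hr hs)

lemma mySummable_LT1 (c r : ℂ) (hr : ‖r‖ < 1) :
    Summable (fun n : ℕ => Complex.log (1 - c * r ^ n)) :=
  mySummable_log (mySummable_geom1 c r hr)

lemma myTsum_shift1 {F : ℕ × ℕ → ℂ} (hF : Summable F) :
    ∑' jk : ℕ × ℕ, F jk = (∑' k : ℕ, F (0, k)) + ∑' jk : ℕ × ℕ, F (jk.1 + 1, jk.2) := by
  have hfib : ∀ j : ℕ, Summable fun k => F (j, k) := fun j => hF.prod_factor j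
  have hout : Summable fun j : ℕ => ∑' k, F (j, k) :=
    (hF.hasSum.prod_fiberwise fun j => (hfib j).hasSum).summable
  have hshift : Summable fun jk : ℕ × ℕ => F (jk.1 + 1, jk.2) :=
    hF.comp_injective (i := fun jk : ℕ × ℕ => (jk.1 + 1, jk.2))
      (fun a b hab => by
        simp only [Prod.mk.injEq] at hab
        exact Prod.ext (by omega) hab.2)
  rw [Summable.tsum_prod' hF hfib, Summable.tsum_eq_zero_add hout,
    Summable.tsum_prod' hshift (fun j => hshift.prod_factor j)]

lemma myTsum_shift2 {F : ℕ × ℕ → ℂ} (hF : Summable F) :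
    ∑' jk : ℕ × ℕ, F jk = (∑' j : ℕ, F (j, 0)) + ∑' jk : ℕ × ℕ, F (jk.1, jk.2 + 1) := by
  have he : ∀ G : ℕ × ℕ → ℂ, ∑' jk : ℕ × ℕ, G jk = ∑' jk : ℕ × ℕ, G (jk.2, jk.1) :=
    fun G => ((Equiv.prodComm ℕ ℕ).tsum_eq G).symm
  have hF' : Summable fun jk : ℕ × ℕ => F (jk.2, jk.1) :=
    (Equiv.prodComm ℕ ℕ).summable_iff.mpr hF
  rw [he F, myTsum_shift1 hF', he fun jk => F (jk.1, jk.2 + 1)]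

lemma LS_shift1 (c r s : ℂ) (hr : ‖r‖ < 1) (hs : ‖s‖ < 1) :
    LS c r s = LT1 c s + LS (c * r) r s := by
  rw [LS, LT1, myTsum_shift1 (mySummable_LS c r s hr hs)]
  congr 1
  · exact tsum_congr fun k => by norm_num
  · rw [LS]
    exact tsum_congr fun jk => by rw [show c * r ^ (jk.1 + 1) * s ^ jk.2
      = c * r * r ^ jk.1 * s ^ jk.2 from by ring]

lemma LS_shift2 (c r s : ℂ) (hr : ‖r‖ < 1) (hs : ‖s‖ < 1) :
    LS c r s = LT1 c r + LS (c * s) r s := by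
  rw [LS, LT1, myTsum_shift2 (mySummable_LS c r s hr hs)]
  congr 1
  · exact tsum_congr fun k => by norm_num
  · rw [LS]
    exact tsum_congr fun jk => by rw [show c * r ^ jk.1 * s ^ (jk.2 + 1)
      = c * s * r ^ jk.1 * s ^ jk.2 from by ring]


noncomputable def G4 (q p qt pt ca cb cc cd : ℂ) : ℂ :=
  ∏' jk : ℕ × ℕ,
    ((1 - ca * q ^ jk.1 * p ^ jk.2) * (1 - cb * qt ^ jk.1 * pt ^ jk.2)) /
      ((1 - cc * q ^ jk.1 * p ^ jk.2) * (1 - cd * qt ^ jk.1 * pt ^ jk.2))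

lemma one_sub_ne {t : ℂ} (h : t ≠ 1) : (1 : ℂ) - t ≠ 0 :=
  sub_ne_zero.mpr (Ne.symm h)

lemma G4_eq_exp (q p qt pt ca cb cc cd : ℂ)
    (hq : ‖q‖ < 1) (hp : ‖p‖ < 1)
    (hqt : ‖qt‖ < 1) (hpt : ‖pt‖ < 1)
    (ha : ∀ j k : ℕ, ca * q ^ j * p ^ k ≠ 1) (hb : ∀ j k : ℕ, cb * qt ^ j * pt ^ k ≠ 1)
    (hc : ∀ j k : ℕ, cc * q ^ j * p ^ k ≠ 1) (hd : ∀ j k : ℕ, cd * qt ^ j * pt ^ k ≠ 1) :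
    G4 q p qt pt ca cb cc cd =
      Complex.exp (LS ca q p + LS cb qt pt - LS cc q p - LS cd qt pt) := by
  have hsum : HasSum (fun jk : ℕ × ℕ =>
      Complex.log (1 - ca * q ^ jk.1 * p ^ jk.2) + Complex.log (1 - cb * qt ^ jk.1 * pt ^ jk.2)
        - Complex.log (1 - cc * q ^ jk.1 * p ^ jk.2)
        - Complex.log (1 - cd * qt ^ jk.1 * pt ^ jk.2))
      (LS ca q p + LS cb qt pt - LS cc q p - LS cd qt pt) :=
    (((mySummable_LS ca q p hq hp).hasSum.add (mySummable_LS cb qt pt hqt hpt).hasSum).sub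
      (mySummable_LS cc q p hq hp).hasSum).sub (mySummable_LS cd qt pt hqt hpt).hasSum
  have hprod := hsum.cexp
  have hfun : (Complex.exp ∘ fun jk : ℕ × ℕ =>
      Complex.log (1 - ca * q ^ jk.1 * p ^ jk.2) + Complex.log (1 - cb * qt ^ jk.1 * pt ^ jk.2)
        - Complex.log (1 - cc * q ^ jk.1 * p ^ jk.2)
        - Complex.log (1 - cd * qt ^ jk.1 * pt ^ jk.2)) = fun jk : ℕ × ℕ =>
      ((1 - ca * q ^ jk.1 * p ^ jk.2) * (1 - cb * qt ^ jk.1 * pt ^ jk.2)) /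
        ((1 - cc * q ^ jk.1 * p ^ jk.2) * (1 - cd * qt ^ jk.1 * pt ^ jk.2)) := by
    funext jk
    show Complex.exp _ = _
    rw [Complex.exp_sub, Complex.exp_sub, Complex.exp_add,
      Complex.exp_log (one_sub_ne (ha jk.1 jk.2)), Complex.exp_log (one_sub_ne (hb jk.1 jk.2)),
      Complex.exp_log (one_sub_ne (hc jk.1 jk.2)), Complex.exp_log (one_sub_ne (hd jk.1 jk.2)),
      div_div]
  rw [hfun] at hprod
  rw [G4]
  exact hprod.tprod_eq

lemma G4_eq_zero_a (q p qt pt ca cb cc cd : ℂ) (j k : ℕ) (h : ca * q ^ j * p ^ k = 1) :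
    G4 q p qt pt ca cb cc cd = 0 := by
  rw [G4]
  refine (myHasProd_zero (j, k) ?_).tprod_eq
  simp [h]

lemma G4_eq_zero_b (q p qt pt ca cb cc cd : ℂ) (j k : ℕ) (h : cb * qt ^ j * pt ^ k = 1) :
    G4 q p qt pt ca cb cc cd = 0 := by
  rw [G4]
  refine (myHasProd_zero (j, k) ?_).tprod_eq
  simp [h]

lemma theta_eq_exp (z w c2 : ℂ) (hz : z ≠ 0) (hc2 : c2 * z = w) (hw : ‖w‖ < 1)
    (h1 : ∀ k : ℕ, z * w ^ k ≠ 1) (h2 : ∀ k : ℕ, c2 * w ^ k ≠ 1) :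
    theta z w = Complex.exp (LT1 z w + LT1 c2 w) := by
  have hsum : HasSum (fun k : ℕ =>
      Complex.log (1 - z * w ^ k) + Complex.log (1 - c2 * w ^ k)) (LT1 z w + LT1 c2 w) :=
    (mySummable_LT1 z w hw).hasSum.add (mySummable_LT1 c2 w hw).hasSum
  have hprod := hsum.cexp
  have hfun : (Complex.exp ∘ fun k : ℕ =>
      Complex.log (1 - z * w ^ k) + Complex.log (1 - c2 * w ^ k)) = fun k : ℕ =>
      (1 - z * w ^ k) * (1 - w ^ (k + 1) / z) := by
    funext k
    show Complex.exp _ = _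
    rw [Complex.exp_add, Complex.exp_log (one_sub_ne (h1 k)), Complex.exp_log (one_sub_ne (h2 k))]
    have hdiv : w ^ (k + 1) / z = c2 * w ^ k := by
      rw [div_eq_iff hz]; linear_combination (-(w ^ k)) * hc2
    rw [hdiv]
  rw [hfun] at hprod
  rw [theta]
  exact hprod.tprod_eq

lemma theta_eq_zero_1 (z w : ℂ) (k : ℕ) (h : z * w ^ k = 1) : theta z w = 0 := by
  rw [theta]
  refine (myHasProd_zero k ?_).tprod_eq
  simp [h]

lemma theta_eq_zero_2 (z w c2 : ℂ) (hz : z ≠ 0) (hc2 : c2 * z = w) (k : ℕ)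
    (h : c2 * w ^ k = 1) : theta z w = 0 := by
  rw [theta]
  refine (myHasProd_zero k ?_).tprod_eq
  have : w ^ (k + 1) / z = c2 * w ^ k := by
    rw [div_eq_iff hz]; linear_combination (-(w ^ k)) * hc2
  rw [this, h]
  simp

lemma eq1_abstract (q p qt pt x xi y yi : ℂ)
    (hq : ‖q‖ < 1) (hp : ‖p‖ < 1)
    (hqt : ‖qt‖ < 1) (hpt : ‖pt‖ < 1)
    (hxxi : x * xi = 1)
    (hC : ∀ j k : ℕ, x * q ^ j * p ^ k ≠ 1)
    (hCq : ∀ j k : ℕ, x * q * q ^ j * p ^ k ≠ 1)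
    (hD : ∀ j k : ℕ, yi * pt * qt ^ j * pt ^ k ≠ 1) :
    G4 q p qt pt (xi * p) (y * qt) (x * q) (yi * pt) =
      theta x p * G4 q p qt pt (xi * q * p) (y * qt) x (yi * pt) := by
  have hx0 : x ≠ 0 := left_ne_zero_of_mul_eq_one hxxi
  have hc2 : xi * p * x = p := by linear_combination p * hxxi
  by_cases hEa : ∃ j k : ℕ, xi * p * q ^ j * p ^ k = 1
  · obtain ⟨j, k, h⟩ := hEa
    rw [G4_eq_zero_a q p qt pt _ _ _ _ j k h]
    cases j with
    | zero =>
      rw [theta_eq_zero_2 x p (xi * p) hx0 hc2 k (by linear_combination h), zero_mul]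
    | succ j' =>
      rw [G4_eq_zero_a q p qt pt _ _ _ _ j' k (by linear_combination h), mul_zero]
  by_cases hEb : ∃ j k : ℕ, y * qt * qt ^ j * pt ^ k = 1
  · obtain ⟨j, k, h⟩ := hEb
    rw [G4_eq_zero_b q p qt pt _ _ _ _ j k h, G4_eq_zero_b q p qt pt _ _ _ _ j k h, mul_zero]
  push_neg at hEa hEb
  have hA0 : ∀ j k : ℕ, xi * q * p * q ^ j * p ^ k ≠ 1 :=
    fun j k h => hEa (j + 1) k (by linear_combination h)
  have hCp0 : ∀ k : ℕ, x * p ^ k ≠ 1 := fun k h => hC 0 k (by linear_combination h)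
  have hA0p : ∀ k : ℕ, xi * p * p ^ k ≠ 1 := fun k h => hEa 0 k (by linear_combination h)
  rw [G4_eq_exp q p qt pt _ _ _ _ hq hp hqt hpt hEa hEb hCq hD,
    G4_eq_exp q p qt pt _ _ _ _ hq hp hqt hpt hA0 hEb hC hD,
    theta_eq_exp x p (xi * p) hx0 hc2 hp hCp0 hA0p, ← Complex.exp_add]
  congr 1
  have S1 := LS_shift1 (xi * p) q p hq hp
  have S2 := LS_shift1 x q p hq hp
  rw [show xi * p * q = xi * q * p from by ring] at S1
  linear_combination S1 + S2

lemma eq2_abstract (q p qt pt x xi y yi : ℂ)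
    (hq : ‖q‖ < 1) (hp : ‖p‖ < 1)
    (hqt : ‖qt‖ < 1) (hpt : ‖pt‖ < 1)
    (hyyi : y * yi = 1)
    (hC : ∀ j k : ℕ, x * q ^ j * p ^ k ≠ 1)
    (hD : ∀ j k : ℕ, yi * pt * qt ^ j * pt ^ k ≠ 1)
    (hDq : ∀ j k : ℕ, yi * qt * pt * qt ^ j * pt ^ k ≠ 1) :
    G4 q p qt pt (xi * q * p) y x (yi * qt * pt) =
      theta y pt * G4 q p qt pt (xi * q * p) (y * qt) x (yi * pt) := by
  have hy0 : y ≠ 0 := left_ne_zero_of_mul_eq_one hyyi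
  have hc2 : yi * pt * y = pt := by linear_combination pt * hyyi
  by_cases hEb : ∃ j k : ℕ, y * qt ^ j * pt ^ k = 1
  · obtain ⟨j, k, h⟩ := hEb
    rw [G4_eq_zero_b q p qt pt _ _ _ _ j k h]
    cases j with
    | zero =>
      rw [theta_eq_zero_1 y pt k (by linear_combination h), zero_mul]
    | succ j' =>
      rw [G4_eq_zero_b q p qt pt _ _ _ _ j' k (by linear_combination h), mul_zero]
  by_cases hEa : ∃ j k : ℕ, xi * q * p * q ^ j * p ^ k = 1
  · obtain ⟨j, k, h⟩ := hEa
    rw [G4_eq_zero_a q p qt pt _ _ _ _ j k h, G4_eq_zero_a q p qt pt _ _ _ _ j k h, mul_zero]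
  push_neg at hEa hEb
  have hB0 : ∀ j k : ℕ, y * qt * qt ^ j * pt ^ k ≠ 1 :=
    fun j k h => hEb (j + 1) k (by linear_combination h)
  have hBpt : ∀ k : ℕ, y * pt ^ k ≠ 1 := fun k h => hEb 0 k (by linear_combination h)
  have hDpt : ∀ k : ℕ, yi * pt * pt ^ k ≠ 1 := fun k h => hD 0 k (by linear_combination h)
  rw [G4_eq_exp q p qt pt _ _ _ _ hq hp hqt hpt hEa hEb hC hDq,
    G4_eq_exp q p qt pt _ _ _ _ hq hp hqt hpt hEa hB0 hC hD,
    theta_eq_exp y pt (yi * pt) hy0 hc2 hpt hBpt hDpt, ← Complex.exp_add]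
  congr 1
  have S3 := LS_shift1 y qt pt hqt hpt
  have S4 := LS_shift1 (yi * pt) qt pt hqt hpt
  rw [show yi * pt * qt = yi * qt * pt from by ring] at S4
  linear_combination S3 + S4

lemma eq3_abstract (q p qt pt x xi y yi : ℂ)
    (hq : ‖q‖ < 1) (hp : ‖p‖ < 1)
    (hqt : ‖qt‖ < 1) (hpt : ‖pt‖ < 1)
    (hxxi : x * xi = 1) (hyyi : y * yi = 1) (hqt0 : qt ≠ 0)
    (hC : ∀ j k : ℕ, x * q ^ j * p ^ k ≠ 1)
    (hCp : ∀ j k : ℕ, x * p * q ^ j * p ^ k ≠ 1)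
    (hDyi : ∀ j k : ℕ, yi * qt ^ j * pt ^ k ≠ 1)
    (hθ4 : theta (y * qt) qt ≠ 0) :
    G4 q p qt pt (xi * q) (y * qt * pt) (x * p) yi =
      theta x q / theta (y * qt) qt * G4 q p qt pt (xi * q * p) (y * qt) x (yi * pt) := by
  have hx0 : x ≠ 0 := left_ne_zero_of_mul_eq_one hxxi
  have hy0 : y ≠ 0 := left_ne_zero_of_mul_eq_one hyyi
  have hyqt0 : y * qt ≠ 0 := mul_ne_zero hy0 hqt0
  have hc2x : xi * q * x = q := by linear_combination q * hxxi
  have hc2y : yi * (y * qt) = qt := by linear_combination qt * hyyi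
  have hD : ∀ j k : ℕ, yi * pt * qt ^ j * pt ^ k ≠ 1 :=
    fun j k h => hDyi j (k + 1) (by linear_combination h)
  have hB0 : ∀ j : ℕ, y * qt * qt ^ j ≠ 1 :=
    fun j h => hθ4 (theta_eq_zero_1 (y * qt) qt j h)
  by_cases hEa : ∃ j k : ℕ, xi * q * q ^ j * p ^ k = 1
  · obtain ⟨j, k, h⟩ := hEa
    rw [G4_eq_zero_a q p qt pt _ _ _ _ j k h]
    cases k with
    | zero =>
      rw [theta_eq_zero_2 x q (xi * q) hx0 hc2x j (by linear_combination h), zero_div, zero_mul]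
    | succ k' =>
      rw [G4_eq_zero_a q p qt pt _ _ _ _ j k' (by linear_combination h), mul_zero]
  by_cases hEb : ∃ j k : ℕ, y * qt * pt * qt ^ j * pt ^ k = 1
  · obtain ⟨j, k, h⟩ := hEb
    rw [G4_eq_zero_b q p qt pt _ _ _ _ j k h,
      G4_eq_zero_b q p qt pt _ _ _ _ j (k + 1) (by linear_combination h), mul_zero]
  push_neg at hEa hEb
  have hA0 : ∀ j k : ℕ, xi * q * p * q ^ j * p ^ k ≠ 1 :=
    fun j k h => hEa j (k + 1) (by linear_combination h)
  have hB1 : ∀ j k : ℕ, y * qt * qt ^ j * pt ^ k ≠ 1 := by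
    intro j k
    cases k with
    | zero => exact fun h => hB0 j (by linear_combination h)
    | succ k' => exact fun h => hEb j k' (by linear_combination h)
  have hθ3a : ∀ k : ℕ, x * q ^ k ≠ 1 := fun k h => hC k 0 (by linear_combination h)
  have hθ3b : ∀ k : ℕ, xi * q * q ^ k ≠ 1 := fun k h => hEa k 0 (by linear_combination h)
  have hθ4a : ∀ k : ℕ, y * qt * qt ^ k ≠ 1 := hB0
  have hθ4b : ∀ k : ℕ, yi * qt ^ k ≠ 1 := fun k h => hDyi k 0 (by linear_combination h)
  rw [G4_eq_exp q p qt pt _ _ _ _ hq hp hqt hpt hEa hEb hCp hDyi,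
    G4_eq_exp q p qt pt _ _ _ _ hq hp hqt hpt hA0 hB1 hC hD,
    theta_eq_exp x q (xi * q) hx0 hc2x hq hθ3a hθ3b,
    theta_eq_exp (y * qt) qt yi hyqt0 hc2y hqt hθ4a hθ4b,
    ← Complex.exp_sub, ← Complex.exp_add]
  congr 1
  have T1 := LS_shift2 (xi * q) q p hq hp
  have T2 := LS_shift2 x q p hq hp
  have T3 := LS_shift2 (y * qt) qt pt hqt hpt
  have T4 := LS_shift2 yi qt pt hqt hpt
  linear_combination T1 + T2 - T3 - T4

/-- The modified elliptic gamma function `G(u;ω₁,ω₂,ω₃)`. -/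
noncomputable def Gell (ω₁ ω₂ ω₃ u : ℂ) : ℂ :=
  ∏' jk : ℕ × ℕ,
    ((1 - Complex.exp (-(2 * π * 𝕚 * u / ω₂)) * Complex.exp (2 * π * 𝕚 * ω₁ / ω₂) ^ (jk.1 + 1) *
          Complex.exp (2 * π * 𝕚 * ω₃ / ω₂) ^ (jk.2 + 1)) *
      (1 - Complex.exp (2 * π * 𝕚 * u / ω₁) * Complex.exp (-(2 * π * 𝕚 * ω₂ / ω₁)) ^ (jk.1 + 1) *
          Complex.exp (2 * π * 𝕚 * ω₃ / ω₁) ^ jk.2)) /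
    ((1 - Complex.exp (2 * π * 𝕚 * u / ω₂) * Complex.exp (2 * π * 𝕚 * ω₁ / ω₂) ^ jk.1 *
          Complex.exp (2 * π * 𝕚 * ω₃ / ω₂) ^ jk.2) *
      (1 - Complex.exp (-(2 * π * 𝕚 * u / ω₁)) * Complex.exp (-(2 * π * 𝕚 * ω₂ / ω₁)) ^ jk.1 *
          Complex.exp (2 * π * 𝕚 * ω₃ / ω₁) ^ (jk.2 + 1)))

/-- The three difference equations satisfied by the modified elliptic gamma function `G`. -/
theorem Gell_difference_equations (ω₁ ω₂ ω₃ : ℂ)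
    (hω₁ : ω₁ ≠ 0) (hω₂ : ω₂ ≠ 0) (hω₃ : ω₃ ≠ 0)
    (hq : ‖Complex.exp (2 * π * 𝕚 * ω₁ / ω₂)‖ < 1)
    (hp : ‖Complex.exp (2 * π * 𝕚 * ω₃ / ω₂)‖ < 1)
    (hpt : ‖Complex.exp (2 * π * 𝕚 * ω₃ / ω₁)‖ < 1)
    (u : ℂ)
    (hden : ∀ v : ℂ, (v = u ∨ v = u + ω₁ ∨ v = u + ω₂ ∨ v = u + ω₃) →
      ∀ j k : ℕ,
        Complex.exp (2 * π * 𝕚 * v / ω₂) * Complex.exp (2 * π * 𝕚 * ω₁ / ω₂) ^ j *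
            Complex.exp (2 * π * 𝕚 * ω₃ / ω₂) ^ k ≠ 1 ∧
        Complex.exp (-(2 * π * 𝕚 * v / ω₁)) * Complex.exp (-(2 * π * 𝕚 * ω₂ / ω₁)) ^ j *
            Complex.exp (2 * π * 𝕚 * ω₃ / ω₁) ^ k ≠ 1)
    (hθ : theta (Complex.exp (2 * π * 𝕚 * u / ω₁) * Complex.exp (-(2 * π * 𝕚 * ω₂ / ω₁)))
        (Complex.exp (-(2 * π * 𝕚 * ω₂ / ω₁))) ≠ 0) :
    Gell ω₁ ω₂ ω₃ (u + ω₁) =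
        theta (Complex.exp (2 * π * 𝕚 * u / ω₂)) (Complex.exp (2 * π * 𝕚 * ω₃ / ω₂)) *
          Gell ω₁ ω₂ ω₃ u ∧
    Gell ω₁ ω₂ ω₃ (u + ω₂) =
        theta (Complex.exp (2 * π * 𝕚 * u / ω₁)) (Complex.exp (2 * π * 𝕚 * ω₃ / ω₁)) *
          Gell ω₁ ω₂ ω₃ u ∧
    Gell ω₁ ω₂ ω₃ (u + ω₃) =
        theta (Complex.exp (2 * π * 𝕚 * u / ω₂)) (Complex.exp (2 * π * 𝕚 * ω₁ / ω₂)) /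
          theta (Complex.exp (2 * π * 𝕚 * u / ω₁) * Complex.exp (-(2 * π * 𝕚 * ω₂ / ω₁)))
            (Complex.exp (-(2 * π * 𝕚 * ω₂ / ω₁))) *
          Gell ω₁ ω₂ ω₃ u := by
    -- |q̃| < 1 follows from |q| < 1
  have hqtlt : ‖Complex.exp (-(2 * π * 𝕚 * ω₂ / ω₁))‖ < 1 := by
    have hne : ω₁ / ω₂ ≠ 0 := div_ne_zero hω₁ hω₂
    have hπ := Real.pi_pos
    have hkey : ∀ w : ℂ, (2 * π * 𝕚 * w).re = -(2 * Real.pi * w.im) := by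
      intro w
      simp [Complex.mul_re, Complex.mul_im]
    have h2 : (2 * π * 𝕚 * (ω₁ / ω₂)).re < 0 := by
      rw [← Real.exp_lt_exp (y := 0), Real.exp_zero, ← Complex.norm_exp]
      rw [show 2 * π * 𝕚 * (ω₁ / ω₂) = 2 * π * 𝕚 * ω₁ / ω₂ from by ring]
      exact hq
    have h3 : 0 < (ω₁ / ω₂).im := by
      rw [hkey] at h2
      nlinarith
    have h4 : (ω₂ / ω₁).im < 0 := by
      rw [show ω₂ / ω₁ = (ω₁ / ω₂)⁻¹ from by rw [inv_div], Complex.inv_im]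
      exact div_neg_of_neg_of_pos (neg_lt_zero.mpr h3) (Complex.normSq_pos.mpr hne)
    rw [show -(2 * π * 𝕚 * ω₂ / ω₁) = 2 * π * 𝕚 * (-(ω₂ / ω₁)) from by ring,
      Complex.norm_exp, hkey, ← Real.exp_zero, Real.exp_lt_exp, Complex.neg_im]
    nlinarith
  have hden0 := hden u (Or.inl rfl)
  have hden1 := hden (u + ω₁) (Or.inr (Or.inl rfl))
  have hden2 := hden (u + ω₂) (Or.inr (Or.inr (Or.inl rfl)))
  have hden3 := hden (u + ω₃) (Or.inr (Or.inr (Or.inr rfl)))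
  set q := Complex.exp (2 * π * 𝕚 * ω₁ / ω₂) with hq_def
  set p := Complex.exp (2 * π * 𝕚 * ω₃ / ω₂) with hp_def
  set qt := Complex.exp (-(2 * π * 𝕚 * ω₂ / ω₁)) with hqt_def
  set pt := Complex.exp (2 * π * 𝕚 * ω₃ / ω₁) with hpt_def
  set x := Complex.exp (2 * π * 𝕚 * u / ω₂) with hx_def
  set xi := Complex.exp (-(2 * π * 𝕚 * u / ω₂)) with hxi_def
  set y := Complex.exp (2 * π * 𝕚 * u / ω₁) with hy_def
  set yi := Complex.exp (-(2 * π * 𝕚 * u / ω₁)) with hyi_def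
  set qi := Complex.exp (-(2 * π * 𝕚 * ω₁ / ω₂)) with hqi_def
  set pii := Complex.exp (-(2 * π * 𝕚 * ω₃ / ω₂)) with hpii_def
  set qti := Complex.exp (2 * π * 𝕚 * ω₂ / ω₁) with hqti_def
  set pti := Complex.exp (-(2 * π * 𝕚 * ω₃ / ω₁)) with hpti_def
  have hexp2pi : Complex.exp (2 * π * 𝕚) = 1 := Complex.exp_two_pi_mul_I
  have hexpneg2pi : Complex.exp (-(2 * π * 𝕚)) = 1 := by
    rw [Complex.exp_neg, hexp2pi, inv_one]
  have hxxi : x * xi = 1 := by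
    rw [hx_def, hxi_def, ← Complex.exp_add, add_neg_cancel, Complex.exp_zero]
  have hyyi : y * yi = 1 := by
    rw [hy_def, hyi_def, ← Complex.exp_add, add_neg_cancel, Complex.exp_zero]
  have hqqi : q * qi = 1 := by
    rw [hq_def, hqi_def, ← Complex.exp_add, add_neg_cancel, Complex.exp_zero]
  have hppii : p * pii = 1 := by
    rw [hp_def, hpii_def, ← Complex.exp_add, add_neg_cancel, Complex.exp_zero]
  have hqtqti : qt * qti = 1 := by
    rw [hqt_def, hqti_def, ← Complex.exp_add, neg_add_cancel, Complex.exp_zero]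
  have hptpti : pt * pti = 1 := by
    rw [hpt_def, hpti_def, ← Complex.exp_add, add_neg_cancel, Complex.exp_zero]
  have hqt0 : qt ≠ 0 := by rw [hqt_def]; exact Complex.exp_ne_zero _
  -- exponential splitting identities
  have hXu1 : Complex.exp (2 * π * 𝕚 * (u + ω₁) / ω₂) = x * q := by
    rw [hx_def, hq_def, ← Complex.exp_add]; congr 1; ring
  have hXiu1 : Complex.exp (-(2 * π * 𝕚 * (u + ω₁) / ω₂)) = xi * qi := by
    rw [hxi_def, hqi_def, ← Complex.exp_add]; congr 1; ring
  have hYu1 : Complex.exp (2 * π * 𝕚 * (u + ω₁) / ω₁) = y := by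
    rw [hy_def, show 2 * π * 𝕚 * (u + ω₁) / ω₁ = 2 * π * 𝕚 * u / ω₁ + 2 * π * 𝕚 from by
      field_simp, Complex.exp_add, hexp2pi, mul_one]
  have hYiu1 : Complex.exp (-(2 * π * 𝕚 * (u + ω₁) / ω₁)) = yi := by
    rw [hyi_def, show -(2 * π * 𝕚 * (u + ω₁) / ω₁) = -(2 * π * 𝕚 * u / ω₁) + -(2 * π * 𝕚) from by
      field_simp; ring, Complex.exp_add, hexpneg2pi, mul_one]
  have hXu2 : Complex.exp (2 * π * 𝕚 * (u + ω₂) / ω₂) = x := by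
    rw [hx_def, show 2 * π * 𝕚 * (u + ω₂) / ω₂ = 2 * π * 𝕚 * u / ω₂ + 2 * π * 𝕚 from by
      field_simp, Complex.exp_add, hexp2pi, mul_one]
  have hXiu2 : Complex.exp (-(2 * π * 𝕚 * (u + ω₂) / ω₂)) = xi := by
    rw [hxi_def, show -(2 * π * 𝕚 * (u + ω₂) / ω₂) = -(2 * π * 𝕚 * u / ω₂) + -(2 * π * 𝕚) from by
      field_simp; ring, Complex.exp_add, hexpneg2pi, mul_one]
  have hYu2 : Complex.exp (2 * π * 𝕚 * (u + ω₂) / ω₁) = y * qti := by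
    rw [hy_def, hqti_def, ← Complex.exp_add]; congr 1; ring
  have hYiu2 : Complex.exp (-(2 * π * 𝕚 * (u + ω₂) / ω₁)) = yi * qt := by
    rw [hyi_def, hqt_def, ← Complex.exp_add]; congr 1; ring
  have hXu3 : Complex.exp (2 * π * 𝕚 * (u + ω₃) / ω₂) = x * p := by
    rw [hx_def, hp_def, ← Complex.exp_add]; congr 1; ring
  have hXiu3 : Complex.exp (-(2 * π * 𝕚 * (u + ω₃) / ω₂)) = xi * pii := by
    rw [hxi_def, hpii_def, ← Complex.exp_add]; congr 1; ring
  have hYu3 : Complex.exp (2 * π * 𝕚 * (u + ω₃) / ω₁) = y * pt := by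
    rw [hy_def, hpt_def, ← Complex.exp_add]; congr 1; ring
  have hYiu3 : Complex.exp (-(2 * π * 𝕚 * (u + ω₃) / ω₁)) = yi * pti := by
    rw [hyi_def, hpti_def, ← Complex.exp_add]; congr 1; ring
  simp only [hXu1, hYiu1] at hden1
  simp only [hXu2, hYiu2] at hden2
  simp only [hXu3, hYiu3] at hden3
  -- canonical forms
  have hG0 : Gell ω₁ ω₂ ω₃ u = G4 q p qt pt (xi * q * p) (y * qt) x (yi * pt) := by
    unfold Gell G4
    refine tprod_congr fun jk => ?_
    rw [← hq_def, ← hp_def, ← hqt_def, ← hpt_def, ← hx_def, ← hxi_def, ← hy_def, ← hyi_def]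
    congr 1
    · congr 1 <;> ring
    · congr 1 <;> ring
  have hG1 : Gell ω₁ ω₂ ω₃ (u + ω₁) = G4 q p qt pt (xi * p) (y * qt) (x * q) (yi * pt) := by
    unfold Gell G4
    refine tprod_congr fun jk => ?_
    rw [hXu1, hXiu1, hYu1, hYiu1, ← hq_def, ← hp_def, ← hqt_def, ← hpt_def]
    congr 1
    · congr 1
      · linear_combination (-(xi * q ^ jk.1 * p ^ (jk.2 + 1))) * hqqi
      · ring
    · congr 1 <;> ring
  have hG2 : Gell ω₁ ω₂ ω₃ (u + ω₂) = G4 q p qt pt (xi * q * p) y x (yi * qt * pt) := by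
    unfold Gell G4
    refine tprod_congr fun jk => ?_
    rw [hXu2, hXiu2, hYu2, hYiu2, ← hq_def, ← hp_def, ← hqt_def, ← hpt_def]
    congr 1
    · congr 1
      · ring
      · linear_combination (-(y * qt ^ jk.1 * pt ^ jk.2)) * hqtqti
    · congr 1 <;> ring
  have hG3 : Gell ω₁ ω₂ ω₃ (u + ω₃) = G4 q p qt pt (xi * q) (y * qt * pt) (x * p) yi := by
    unfold Gell G4
    refine tprod_congr fun jk => ?_
    rw [hXu3, hXiu3, hYu3, hYiu3, ← hq_def, ← hp_def, ← hqt_def, ← hpt_def]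
    congr 1
    · congr 1
      · linear_combination (-(xi * q ^ (jk.1 + 1) * p ^ jk.2)) * hppii
      · ring
    · congr 1
      linear_combination (-(yi * qt ^ jk.1 * pt ^ jk.2)) * hptpti
  -- hypothesis wiring
  have hC : ∀ j k : ℕ, x * q ^ j * p ^ k ≠ 1 := fun j k => (hden0 j k).1
  have hD : ∀ j k : ℕ, yi * pt * qt ^ j * pt ^ k ≠ 1 :=
    fun j k h => (hden0 j (k + 1)).2 (by linear_combination h)
  have hCq : ∀ j k : ℕ, x * q * q ^ j * p ^ k ≠ 1 := fun j k => (hden1 j k).1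
  have hDq : ∀ j k : ℕ, yi * qt * pt * qt ^ j * pt ^ k ≠ 1 :=
    fun j k h => (hden2 j (k + 1)).2 (by linear_combination h)
  have hCp : ∀ j k : ℕ, x * p * q ^ j * p ^ k ≠ 1 := fun j k => (hden3 j k).1
  have hDyi : ∀ j k : ℕ, yi * qt ^ j * pt ^ k ≠ 1 :=
    fun j k h => (hden3 j (k + 1)).2 (by linear_combination h + yi * qt ^ j * pt ^ k * hptpti)
  refine ⟨?_, ?_, ?_⟩
  · rw [hG1, hG0]
    exact eq1_abstract q p qt pt x xi y yi hq hp hqtlt hpt hxxi hC hCq hD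
  · rw [hG2, hG0]
    exact eq2_abstract q p qt pt x xi y yi hq hp hqtlt hpt hyyi hC hD hDq
  · rw [hG3, hG0]
    exact eq3_abstract q p qt pt x xi y yi hq hp hqtlt hpt hxxi hyyi hqt0 hC hCp hDyi hθ
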